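/- Let the zero set be N := {(τ,j) ∈ ℤ^m × ℕ : ‖σ(τ,j)‖ = 0}. The system is globally hypoelliptic at the Fourier coefficient level if and only if N is finite and the Diophantine condition (DC) holds. -/

import Mathlib

open Real

/-- Euclidean norm of an integer vector `τ ∈ ℤ^m`. -/
noncomputable def eNormZ {m : ℕ} (τ : Fin m → ℤ) : ℝ :=
  Real.sqrt (∑ i, ((τ i : ℝ)) ^ 2)

/-- The weight `w(τ,j) = ‖τ‖^(1/σ) + j^(1/(2nμ))`. -/
noncomputable def wgt (m n : ℕ) (σ μ : ℝ) (τ : Fin m → ℤ) (j : ℕ) : ℝ :=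
  eNormZ τ ^ (1 / σ) + (j : ℝ) ^ (1 / (2 * n * μ))

/-- GS-decay: `|a(τ,j)| ≤ C exp(-ε w(τ,j))` for some `C, ε > 0`. -/
def GSDecay (m n : ℕ) (σ μ : ℝ) (a : (Fin m → ℤ) → ℕ → ℂ) : Prop :=
  ∃ C > 0, ∃ ε > 0, ∀ τ j, ‖a τ j‖ ≤ C * Real.exp (-ε * wgt m n σ μ τ j)

/-- GS-growth: for all `ε > 0` there is `C > 0` with `|a(τ,j)| ≤ C exp(ε w(τ,j))`. -/
def GSGrowth (m n : ℕ) (σ μ : ℝ) (a : (Fin m → ℤ) → ℕ → ℂ) : Prop :=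
  ∀ ε > 0, ∃ C > 0, ∀ τ j, ‖a τ j‖ ≤ C * Real.exp (ε * wgt m n σ μ τ j)

/-- Symbol of the operator `L_r = Q_r(D_t) + d_r P(x,D_x)`: `σ_r(τ,j) = Q_r(τ) + d_r λ_j`. -/
noncomputable def symb {m ℓ : ℕ} (Q : Fin ℓ → MvPolynomial (Fin m) ℂ)
    (d : Fin ℓ → ℂ) (lam : ℕ → ℝ) (r : Fin ℓ) (τ : Fin m → ℤ) (j : ℕ) : ℂ :=
  MvPolynomial.eval (fun i => ((τ i : ℂ))) (Q r) + d r * (lam j : ℂ)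

/-- `‖σ(τ,j)‖ = max_{1 ≤ r ≤ ℓ} |σ_r(τ,j)|`. -/
noncomputable def symbNorm {m ℓ : ℕ} (Q : Fin ℓ → MvPolynomial (Fin m) ℂ)
    (d : Fin ℓ → ℂ) (lam : ℕ → ℝ) (τ : Fin m → ℤ) (j : ℕ) : ℝ :=
  ⨆ r : Fin ℓ, ‖symb Q d lam r τ j‖

/-- The Diophantine condition (DC). -/
def DioCond (m n ℓ : ℕ) (σ μ : ℝ) (Q : Fin ℓ → MvPolynomial (Fin m) ℂ)
    (d : Fin ℓ → ℂ) (lam : ℕ → ℝ) : Prop :=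
  ∀ ε > 0, ∃ C > 0, ∀ τ j, symbNorm Q d lam τ j ≠ 0 →
    symbNorm Q d lam τ j ≥ C * Real.exp (-ε * wgt m n σ μ τ j)

/-- Global hypoellipticity at the Fourier coefficient level. -/
def GloballyHypoelliptic (m n ℓ : ℕ) (σ μ : ℝ) (Q : Fin ℓ → MvPolynomial (Fin m) ℂ)
    (d : Fin ℓ → ℂ) (lam : ℕ → ℝ) : Prop :=
  ∀ u : (Fin m → ℤ) → ℕ → ℂ, GSGrowth m n σ μ u →
    (∀ r : Fin ℓ, GSDecay m n σ μ (fun τ j => symb Q d lam r τ j * u τ j)) →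
    GSDecay m n σ μ u

/-- Admissible families (compatibility conditions). -/
def Admissible {m ℓ : ℕ} (Q : Fin ℓ → MvPolynomial (Fin m) ℂ) (d : Fin ℓ → ℂ)
    (lam : ℕ → ℝ) (f : Fin ℓ → (Fin m → ℤ) → ℕ → ℂ) : Prop :=
  (∀ r s τ j, symb Q d lam r τ j * f s τ j = symb Q d lam s τ j * f r τ j) ∧
  (∀ r τ j, symb Q d lam r τ j = 0 → f r τ j = 0)

/-- Global solvability at the Fourier coefficient level. -/
def GloballySolvable (m n ℓ : ℕ) (σ μ : ℝ) (Q : Fin ℓ → MvPolynomial (Fin m) ℂ)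
    (d : Fin ℓ → ℂ) (lam : ℕ → ℝ) : Prop :=
  ∀ f : Fin ℓ → (Fin m → ℤ) → ℕ → ℂ, Admissible Q d lam f →
    (∀ r, GSGrowth m n σ μ (f r)) →
    ∃ u : (Fin m → ℤ) → ℕ → ℂ, GSGrowth m n σ μ u ∧
      ∀ r τ j, symb Q d lam r τ j * u τ j = f r τ j

lemma eNormZ_nonneg {m : ℕ} (τ : Fin m → ℤ) : 0 ≤ eNormZ τ := Real.sqrt_nonneg _

lemma wgt_nonneg (m n : ℕ) (σ μ : ℝ) (τ : Fin m → ℤ) (j : ℕ) : 0 ≤ wgt m n σ μ τ j :=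
  add_nonneg (Real.rpow_nonneg (eNormZ_nonneg τ) _) (Real.rpow_nonneg (Nat.cast_nonneg j) _)

lemma abs_le_eNormZ {m : ℕ} (τ : Fin m → ℤ) (i : Fin m) : |((τ i : ℝ))| ≤ eNormZ τ := by
  rw [← Real.sqrt_sq_eq_abs]
  exact Real.sqrt_le_sqrt
    (Finset.single_le_sum (fun k _ => sq_nonneg ((τ k : ℝ))) (Finset.mem_univ i))

lemma rpow_inv_le {x M e : ℝ} (hx : 0 ≤ x) (he : 0 < e)
    (h : x ^ (1 / e) ≤ M) : x ≤ M ^ e := by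
  have h2 : (x ^ (1/e)) ^ e ≤ M ^ e :=
    Real.rpow_le_rpow (Real.rpow_nonneg hx _) h he.le
  rwa [← Real.rpow_mul hx, one_div_mul_cancel he.ne', Real.rpow_one] at h2

lemma finite_wgt_le (m n : ℕ) (σ μ : ℝ) (hσ : 1 ≤ σ) (hn : 1 ≤ n) (hμ : 1/2 ≤ μ) (M : ℝ) :
    {p : (Fin m → ℤ) × ℕ | wgt m n σ μ p.1 p.2 ≤ M}.Finite := by
  have hσ0 : (0:ℝ) < σ := lt_of_lt_of_le one_pos hσ
  have hβ0 : (0:ℝ) < 2 * n * μ := by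
    have : (1:ℝ) ≤ (n:ℝ) := by exact_mod_cast hn
    nlinarith
  set M' : ℝ := max M 0 with hM'
  set K : ℤ := ⌈M' ^ σ⌉ with hK
  set K2 : ℕ := ⌈M' ^ (2 * n * μ)⌉₊ with hK2
  apply Set.Finite.subset (Set.Finite.prod
    (Set.Finite.pi' fun _ : Fin m => Set.finite_Icc (-K) K) (Set.finite_Iic K2))
  rintro ⟨τ, j⟩ hp
  simp only [Set.mem_setOf_eq] at hp
  have h1 : eNormZ τ ^ (1 / σ) ≤ M' := by
    have := Real.rpow_nonneg (Nat.cast_nonneg j) (1 / (2 * (n:ℝ) * μ))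
    have := le_max_left M (0:ℝ)
    unfold wgt at hp; linarith
  have h2 : (j : ℝ) ^ (1 / (2 * (n:ℝ) * μ)) ≤ M' := by
    have := Real.rpow_nonneg (eNormZ_nonneg τ) (1 / σ)
    have := le_max_left M (0:ℝ)
    unfold wgt at hp; linarith
  have hτ : eNormZ τ ≤ M' ^ σ := rpow_inv_le (eNormZ_nonneg τ) hσ0 h1
  have hj : (j : ℝ) ≤ M' ^ (2 * (n:ℝ) * μ) := rpow_inv_le (Nat.cast_nonneg j) hβ0 h2
  constructor
  · intro i
    have h3 : |((τ i : ℝ))| ≤ (K : ℝ) :=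
      le_trans (le_trans (abs_le_eNormZ τ i) hτ) (Int.le_ceil _)
    have h4 : |τ i| ≤ K := by
      exact_mod_cast (by rwa [← Int.cast_abs] at h3 : ((|τ i| : ℤ) : ℝ) ≤ (K:ℝ))
    simp only [Set.mem_Icc]
    exact abs_le.mp h4
  · simp only [Set.mem_Iic]
    have : (j:ℝ) ≤ (K2:ℝ) := hj.trans (Nat.le_ceil _)
    exact_mod_cast this

lemma abs_symb_le {m ℓ : ℕ} (Q : Fin ℓ → MvPolynomial (Fin m) ℂ)
    (d : Fin ℓ → ℂ) (lam : ℕ → ℝ) (r : Fin ℓ) (τ : Fin m → ℤ) (j : ℕ) :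
    ‖symb Q d lam r τ j‖ ≤ symbNorm Q d lam τ j := by
  have : BddAbove (Set.range (fun r => ‖symb Q d lam r τ j‖)) :=
    Set.Finite.bddAbove (Set.finite_range _)
  exact le_ciSup this r

lemma symbNorm_nonneg {m ℓ : ℕ} (hℓ : 1 ≤ ℓ) (Q : Fin ℓ → MvPolynomial (Fin m) ℂ)
    (d : Fin ℓ → ℂ) (lam : ℕ → ℝ) (τ : Fin m → ℤ) (j : ℕ) :
    0 ≤ symbNorm Q d lam τ j :=
  le_trans (norm_nonneg _) (abs_symb_le Q d lam ⟨0, hℓ⟩ τ j)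

lemma exists_symbNorm_eq {m ℓ : ℕ} (hℓ : 1 ≤ ℓ) (Q : Fin ℓ → MvPolynomial (Fin m) ℂ)
    (d : Fin ℓ → ℂ) (lam : ℕ → ℝ) (τ : Fin m → ℤ) (j : ℕ) :
    ∃ r, symbNorm Q d lam τ j = ‖symb Q d lam r τ j‖ := by
  haveI : Nonempty (Fin ℓ) := ⟨⟨0, hℓ⟩⟩
  obtain ⟨r, hr⟩ := Finite.exists_max (fun r => ‖symb Q d lam r τ j‖)
  exact ⟨r, le_antisymm (ciSup_le hr) (abs_symb_le Q d lam r τ j)⟩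

lemma symb_eq_zero_of_symbNorm {m ℓ : ℕ} (Q : Fin ℓ → MvPolynomial (Fin m) ℂ)
    (d : Fin ℓ → ℂ) (lam : ℕ → ℝ) (r : Fin ℓ) (τ : Fin m → ℤ) (j : ℕ)
    (h : symbNorm Q d lam τ j = 0) : symb Q d lam r τ j = 0 := by
  have h2 : ‖symb Q d lam r τ j‖ ≤ 0 := h ▸ abs_symb_le Q d lam r τ j
  exact norm_eq_zero.mp (le_antisymm h2 (norm_nonneg _))

lemma exp_mul_exp_neg (a : ℝ) : Real.exp a * Real.exp (-a) = 1 := by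
  rw [← Real.exp_add, add_neg_cancel, Real.exp_zero]

/-- GH ⟺ (the zero set `N` is finite and (DC) holds). -/
theorem statement0 (m n ℓ : ℕ) (hm : 1 ≤ m) (hn : 1 ≤ n) (hℓ : 1 ≤ ℓ)
    (σ μ : ℝ) (hσ : 1 ≤ σ) (hμ : 1 / 2 ≤ μ)
    (Q : Fin ℓ → MvPolynomial (Fin m) ℂ) (d : Fin ℓ → ℂ) (lam : ℕ → ℝ) :
    GloballyHypoelliptic m n ℓ σ μ Q d lam ↔
      ({p : (Fin m → ℤ) × ℕ | symbNorm Q d lam p.1 p.2 = 0}.Finite ∧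
        DioCond m n ℓ σ μ Q d lam) := by
  classical
  constructor
  · intro hGH
    constructor
    · -- finiteness of the zero set
      set u : (Fin m → ℤ) → ℕ → ℂ :=
        fun τ j => if symbNorm Q d lam τ j = 0 then 1 else 0 with hu
      have hgrow : GSGrowth m n σ μ u := by
        intro ε hε
        refine ⟨1, one_pos, fun τ j => ?_⟩
        have h1 : ‖u τ j‖ ≤ 1 := by
          rw [hu]; dsimp only; split <;> simp
        have h2 : (1:ℝ) ≤ Real.exp (ε * wgt m n σ μ τ j) :=
          Real.one_le_exp (mul_nonneg hε.le (wgt_nonneg m n σ μ τ j))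
        calc ‖u τ j‖ ≤ 1 := h1
          _ ≤ 1 * Real.exp (ε * wgt m n σ μ τ j) := by rw [one_mul]; exact h2
      have hdec : ∀ r, GSDecay m n σ μ (fun τ j => symb Q d lam r τ j * u τ j) := by
        intro r
        refine ⟨1, one_pos, 1, one_pos, fun τ j => ?_⟩
        have hz : symb Q d lam r τ j * u τ j = 0 := by
          by_cases h : symbNorm Q d lam τ j = 0
          · rw [symb_eq_zero_of_symbNorm Q d lam r τ j h, zero_mul]
          · rw [hu]; dsimp only; rw [if_neg h, mul_zero]
        simp only [hz, norm_zero]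
        positivity
      obtain ⟨C, hC, ε, hε, hb⟩ := hGH u hgrow hdec
      apply (finite_wgt_le m n σ μ hσ hn hμ (Real.log C / ε)).subset
      rintro ⟨τ, j⟩ hp
      simp only [Set.mem_setOf_eq] at hp ⊢
      have hb' := hb τ j
      rw [hu] at hb'; dsimp only at hb'; rw [if_pos hp] at hb'
      simp only [norm_one] at hb'
      have h2 : Real.exp (ε * wgt m n σ μ τ j) ≤ C := by
        rw [neg_mul, Real.exp_neg, ← div_eq_mul_inv, le_div_iff₀ (Real.exp_pos _), one_mul] at hb'
        exact hb'
      have h3 : ε * wgt m n σ μ τ j ≤ Real.log C := (Real.le_log_iff_exp_le hC).mpr h2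
      rw [le_div_iff₀ hε]
      linarith [h3]
    · -- Diophantine condition
      intro ε0 hε0
      set A : Set ((Fin m → ℤ) × ℕ) :=
        {p | symbNorm Q d lam p.1 p.2 ≠ 0 ∧
          symbNorm Q d lam p.1 p.2 ≤ Real.exp (-ε0 * wgt m n σ μ p.1 p.2)} with hA
      set u : (Fin m → ℤ) → ℕ → ℂ := fun τ j => if (τ, j) ∈ A then 1 else 0 with hu
      have huabs : ∀ τ j, ‖u τ j‖ ≤ 1 := by
        intro τ j; rw [hu]; dsimp only; split <;> simp
      have hgrow : GSGrowth m n σ μ u := by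
        intro ε hε
        refine ⟨1, one_pos, fun τ j => ?_⟩
        have h2 : (1:ℝ) ≤ Real.exp (ε * wgt m n σ μ τ j) :=
          Real.one_le_exp (mul_nonneg hε.le (wgt_nonneg m n σ μ τ j))
        calc ‖u τ j‖ ≤ 1 := huabs τ j
          _ ≤ 1 * Real.exp (ε * wgt m n σ μ τ j) := by rw [one_mul]; exact h2
      have hdec : ∀ r, GSDecay m n σ μ (fun τ j => symb Q d lam r τ j * u τ j) := by
        intro r
        refine ⟨1, one_pos, ε0, hε0, fun τ j => ?_⟩
        by_cases h : (τ, j) ∈ A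
        · rw [hu]; dsimp only; rw [if_pos h, mul_one, one_mul]
          exact le_trans (abs_symb_le Q d lam r τ j) h.2
        · rw [hu]; dsimp only; rw [if_neg h, mul_zero, norm_zero]
          positivity
      obtain ⟨C1, hC1, ε1, hε1, hb⟩ := hGH u hgrow hdec
      have hAfin : A.Finite := by
        apply (finite_wgt_le m n σ μ hσ hn hμ (Real.log C1 / ε1)).subset
        rintro ⟨τ, j⟩ hp
        simp only [Set.mem_setOf_eq]
        have hb' := hb τ j
        rw [hu] at hb'; dsimp only at hb'; rw [if_pos hp] at hb'
        simp only [norm_one] at hb'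
        have h2 : Real.exp (ε1 * wgt m n σ μ τ j) ≤ C1 := by
          rw [neg_mul, Real.exp_neg, ← div_eq_mul_inv, le_div_iff₀ (Real.exp_pos _), one_mul] at hb'
          exact hb'
        have h3 : ε1 * wgt m n σ μ τ j ≤ Real.log C1 := (Real.le_log_iff_exp_le hC1).mpr h2
        rw [le_div_iff₀ hε1]
        linarith [h3]
      set F := hAfin.toFinset with hF
      set g : (Fin m → ℤ) × ℕ → ℝ :=
        fun p => symbNorm Q d lam p.1 p.2 * Real.exp (ε0 * wgt m n σ μ p.1 p.2) with hg
      set T := insert (1:ℝ) (F.image g) with hT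
      have hTne : T.Nonempty := ⟨1, Finset.mem_insert_self _ _⟩
      refine ⟨T.min' hTne, ?_, ?_⟩
      · have hmem := T.min'_mem hTne
        rcases Finset.mem_insert.mp hmem with h | h
        · rw [h]; exact one_pos
        · obtain ⟨p, hpF, hpg⟩ := Finset.mem_image.mp h
          have hpA : p ∈ A := hAfin.mem_toFinset.mp hpF
          rw [← hpg]
          exact mul_pos (lt_of_le_of_ne (symbNorm_nonneg hℓ Q d lam p.1 p.2) (Ne.symm hpA.1))
            (Real.exp_pos _)
      · intro τ j hne
        by_cases h : (τ, j) ∈ A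
        · have hC_le : T.min' hTne ≤ g (τ, j) :=
            Finset.min'_le _ _
              (Finset.mem_insert_of_mem (Finset.mem_image_of_mem g (hAfin.mem_toFinset.mpr h)))
          have hgval : g (τ, j) * Real.exp (-ε0 * wgt m n σ μ τ j) = symbNorm Q d lam τ j := by
            rw [hg]; dsimp only
            rw [mul_assoc]
            rw [show -ε0 * wgt m n σ μ τ j = -(ε0 * wgt m n σ μ τ j) by ring]
            rw [exp_mul_exp_neg, mul_one]
          have h2 := mul_le_mul_of_nonneg_right hC_le (Real.exp_pos (-ε0 * wgt m n σ μ τ j)).le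
          rw [hgval] at h2
          exact h2
        · have h2 : Real.exp (-ε0 * wgt m n σ μ τ j) < symbNorm Q d lam τ j := by
            by_contra hcon
            push_neg at hcon
            exact h ⟨hne, hcon⟩
          have h1 : T.min' hTne ≤ 1 := Finset.min'_le _ _ (Finset.mem_insert_self _ _)
          have h3 := Real.exp_pos (-ε0 * wgt m n σ μ τ j)
          nlinarith
  · rintro ⟨hNfin, hDC⟩
    intro u hgrow hdec
    haveI : Nonempty (Fin ℓ) := ⟨⟨0, hℓ⟩⟩
    choose C hC ε hε hb using hdec
    set ε' := Finset.univ.inf' Finset.univ_nonempty ε with hε'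
    have hε'pos : 0 < ε' := by
      rw [hε', Finset.lt_inf'_iff]
      exact fun r _ => hε r
    set C' := Finset.univ.sup' Finset.univ_nonempty C with hC'
    have hC'pos : 0 < C' :=
      lt_of_lt_of_le (hC ⟨0, hℓ⟩) (Finset.le_sup' C (Finset.mem_univ _))
    have hbound : ∀ r τ j, ‖symb Q d lam r τ j * u τ j‖ ≤
        C' * Real.exp (-ε' * wgt m n σ μ τ j) := by
      intro r τ j
      have h1 := hb r τ j
      have hεle : ε' ≤ ε r := Finset.inf'_le _ (Finset.mem_univ r)
      have h2 : Real.exp (-(ε r) * wgt m n σ μ τ j) ≤ Real.exp (-ε' * wgt m n σ μ τ j) := by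
        apply Real.exp_le_exp.mpr
        nlinarith [wgt_nonneg m n σ μ τ j]
      calc ‖symb Q d lam r τ j * u τ j‖
          ≤ C r * Real.exp (-(ε r) * wgt m n σ μ τ j) := h1
        _ ≤ C' * Real.exp (-ε' * wgt m n σ μ τ j) :=
            mul_le_mul (Finset.le_sup' C (Finset.mem_univ r)) h2 (Real.exp_pos _).le hC'pos.le
    obtain ⟨C0, hC0, hDCb⟩ := hDC (ε'/2) (by linarith)
    have hnz : ∀ τ j, symbNorm Q d lam τ j ≠ 0 →
        ‖u τ j‖ ≤ (C'/C0) * Real.exp (-(ε'/2) * wgt m n σ μ τ j) := by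
      intro τ j hne
      obtain ⟨r, hr⟩ := exists_symbNorm_eq hℓ Q d lam τ j
      have key : symbNorm Q d lam τ j * ‖u τ j‖ ≤
          C' * Real.exp (-ε' * wgt m n σ μ τ j) := by
        rw [hr, ← norm_mul]
        exact hbound r τ j
      have hge := hDCb τ j hne
      set E := Real.exp (-(ε'/2) * wgt m n σ μ τ j) with hE
      have hEpos : 0 < E := Real.exp_pos _
      have hEE : E * E = Real.exp (-ε' * wgt m n σ μ τ j) := by
        rw [hE, ← Real.exp_add]
        congr 1
        ring
      have habs : 0 ≤ ‖u τ j‖ := norm_nonneg _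
      have h3 : C0 * E * ‖u τ j‖ ≤ C' * (E * E) := by
        rw [hEE]
        calc C0 * E * ‖u τ j‖
            ≤ symbNorm Q d lam τ j * ‖u τ j‖ :=
              mul_le_mul_of_nonneg_right hge habs
          _ ≤ C' * Real.exp (-ε' * wgt m n σ μ τ j) := key
      rw [div_mul_eq_mul_div, le_div_iff₀ hC0]
      nlinarith
    set G := hNfin.toFinset with hG
    set T2 := insert (C'/C0) (insert (1:ℝ)
      (G.image fun p => ‖u p.1 p.2‖ * Real.exp ((ε'/2) * wgt m n σ μ p.1 p.2)))
      with hT2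
    have hT2ne : T2.Nonempty := ⟨_, Finset.mem_insert_self _ _⟩
    refine ⟨T2.max' hT2ne, ?_, ε'/2, by linarith, ?_⟩
    · have h1 : (1:ℝ) ≤ T2.max' hT2ne :=
        Finset.le_max' _ _ (Finset.mem_insert_of_mem (Finset.mem_insert_self _ _))
      linarith
    · intro τ j
      by_cases h : symbNorm Q d lam τ j = 0
      · have hmem : ((τ, j) : (Fin m → ℤ) × ℕ) ∈ G := hNfin.mem_toFinset.mpr h
        have h1 : (fun p : (Fin m → ℤ) × ℕ =>
            ‖u p.1 p.2‖ * Real.exp ((ε'/2) * wgt m n σ μ p.1 p.2)) (τ, j) ≤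
            T2.max' hT2ne := by
          apply Finset.le_max'
          rw [hT2]
          exact Finset.mem_insert_of_mem (Finset.mem_insert_of_mem
            (Finset.mem_image_of_mem _ hmem))
        dsimp only at h1
        have hexp : Real.exp ((ε'/2) * wgt m n σ μ τ j) *
            Real.exp (-(ε'/2) * wgt m n σ μ τ j) = 1 := by
          rw [show -(ε'/2) * wgt m n σ μ τ j = -((ε'/2) * wgt m n σ μ τ j) by ring]
          exact exp_mul_exp_neg _
        have h2 := mul_le_mul_of_nonneg_right h1 (Real.exp_pos (-(ε'/2) * wgt m n σ μ τ j)).le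
        rw [mul_assoc, hexp, mul_one] at h2
        exact h2
      · have h1 := hnz τ j h
        have h2 : C'/C0 ≤ T2.max' hT2ne := Finset.le_max' _ _ (Finset.mem_insert_self _ _)
        have h3 := Real.exp_pos (-(ε'/2) * wgt m n σ μ τ j)
        nlinarith
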